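/- arXiv:2209.13286 — 2 statements merged into one kernel-verified Lean document; each statement's English description precedes it below -/
import Mathlib

section
/- Let P be a bounded projection commuting with e^{At}, with ‖e^{At}P‖ ≤ M e^{γ₁ t} for t ≤ 0 (M ≥ 1, γ₁ > 0). Suppose p(t) = Pu(t) satisfies p(τ) = e^{A(τ−t)}p(t) + ∫_t^τ e^{A(τ−s)} P f(u(s)) ds for t ≥ τ, with ‖f(v)‖ ≤ C_f. Then ‖p(t)‖ ≥ e^{γ₁(t−τ)}( (1/M)‖p(τ)‖ − C_f/γ₁ ) for all t ≥ τ. In particular, if ‖p(τ)‖ > M C_f/γ₁ then ‖p(t)‖ → ∞ exponentially as t → ∞. -/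
open Set Filter Metric Bornology Topology intervalIntegral

/-- If `p(t) = Pu(t)` obeys the backward Duhamel identity with
`‖e^{At}P‖ ≤ M e^{γ₁ t}` for `t ≤ 0` and `‖f‖ ≤ C_f`, then
`‖p(t)‖ ≥ e^{γ₁(t−τ)}((1/M)‖p(τ)‖ − C_f/γ₁)` for `t ≥ τ`; in particular, if
`‖p(τ)‖ > M C_f/γ₁` then `‖p(t)‖ → ∞` as `t → ∞`. -/
theorem stmt9 {X : Type*} [NormedAddCommGroup X] [NormedSpace ℝ X] [CompleteSpace X]
    (T : ℝ → X →L[ℝ] X) (P : X →L[ℝ] X) (f : X → X) (u : ℝ → X)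
    (M γ₁ Cf : ℝ) (hM : 1 ≤ M) (hγ₁ : 0 < γ₁) (hCf : 0 ≤ Cf)
    (hP : P.comp P = P)
    (hbound : ∀ t : ℝ, t ≤ 0 → ‖(T t).comp P‖ ≤ M * Real.exp (γ₁ * t))
    (hf : ∀ v : X, ‖f v‖ ≤ Cf)
    (hfu : Continuous fun s => f (u s))
    (hp : ∀ τ t : ℝ, τ ≤ t →
      P (u τ) = T (τ - t) (P (u t)) + ∫ s in t..τ, T (τ - s) (P (f (u s)))) :
    (∀ τ t : ℝ, τ ≤ t →
      Real.exp (γ₁ * (t - τ)) * ((1 / M) * ‖P (u τ)‖ - Cf / γ₁) ≤ ‖P (u t)‖) ∧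
    (∀ τ : ℝ, M * Cf / γ₁ < ‖P (u τ)‖ →
      Tendsto (fun t => ‖P (u t)‖) atTop atTop) := by
  have hM0 : (0:ℝ) < M := lt_of_lt_of_le one_pos hM
  have hpp : ∀ v : X, P v = P (P v) := by
    intro v
    conv_lhs => rw [← hP]
    rfl
  -- key estimate
  have key : ∀ τ t : ℝ, τ ≤ t →
      ‖P (u τ)‖ ≤ M * Real.exp (γ₁ * (τ - t)) * ‖P (u t)‖ + M * Cf / γ₁ := by
    intro τ t hτt
    have h1 : ‖T (τ - t) (P (u t))‖ ≤ M * Real.exp (γ₁ * (τ - t)) * ‖P (u t)‖ := by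
      have e : T (τ - t) (P (u t)) = ((T (τ - t)).comp P) (P (u t)) := by
        rw [ContinuousLinearMap.comp_apply, ← hpp]
      rw [e]
      calc ‖((T (τ - t)).comp P) (P (u t))‖
          ≤ ‖(T (τ - t)).comp P‖ * ‖P (u t)‖ := ContinuousLinearMap.le_opNorm _ _
        _ ≤ M * Real.exp (γ₁ * (τ - t)) * ‖P (u t)‖ :=
            mul_le_mul_of_nonneg_right (hbound _ (by linarith)) (norm_nonneg _)
    have hce : Continuous fun s : ℝ => Real.exp (γ₁ * (τ - s)) :=
      Real.continuous_exp.comp (continuous_const.mul (continuous_const.sub continuous_id))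
    -- the exponential integral
    have hIab : ∫ s in τ..t, Real.exp (γ₁ * (τ - s))
        = (1 - Real.exp (γ₁ * (τ - t))) / γ₁ := by
      have hder : ∀ s ∈ Set.uIcc τ t,
          HasDerivAt (fun s => -(Real.exp (γ₁ * (τ - s)) / γ₁))
            (Real.exp (γ₁ * (τ - s))) s := by
        intro s _
        have h1 : HasDerivAt (fun s : ℝ => γ₁ * (τ - s)) (-γ₁) s := by
          simpa using ((hasDerivAt_id s).const_sub τ).const_mul γ₁
        have h3 := ((h1.exp).div_const γ₁).neg
        have h4 : HasDerivAt (fun x => -(Real.exp (γ₁ * (τ - x)) / γ₁))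
            (-(Real.exp (γ₁ * (τ - s)) * -γ₁ / γ₁)) s := h3
        convert h4 using 1
        rw [mul_neg, neg_div, neg_neg, mul_div_assoc, div_self hγ₁.ne', mul_one]
      have hcont : IntervalIntegrable (fun s => Real.exp (γ₁ * (τ - s)))
          MeasureTheory.volume τ t := hce.intervalIntegrable τ t
      rw [intervalIntegral.integral_eq_sub_of_hasDerivAt hder hcont]
      field_simp
      rw [sub_self, mul_zero, Real.exp_zero]; ring
    have h2 : ‖∫ s in t..τ, T (τ - s) (P (f (u s)))‖ ≤ M * Cf / γ₁ := by
      rw [intervalIntegral.integral_symm, norm_neg]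
      have hb : ∀ᵐ s ∂(MeasureTheory.volume.restrict (Set.uIoc τ t)),
          ‖T (τ - s) (P (f (u s)))‖ ≤ M * Cf * Real.exp (γ₁ * (τ - s)) := by
        filter_upwards [MeasureTheory.ae_restrict_mem measurableSet_uIoc] with s hs
        rw [Set.uIoc_of_le hτt] at hs
        have hs0 : τ - s ≤ 0 := by linarith [hs.1]
        calc ‖T (τ - s) (P (f (u s)))‖ = ‖((T (τ - s)).comp P) (f (u s))‖ := rfl
          _ ≤ ‖(T (τ - s)).comp P‖ * ‖f (u s)‖ := ContinuousLinearMap.le_opNorm _ _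
          _ ≤ (M * Real.exp (γ₁ * (τ - s))) * Cf :=
              mul_le_mul (hbound _ hs0) (hf _) (norm_nonneg _) (by positivity)
          _ = M * Cf * Real.exp (γ₁ * (τ - s)) := by ring
      have hg : IntervalIntegrable (fun s => M * Cf * Real.exp (γ₁ * (τ - s)))
          MeasureTheory.volume τ t := (continuous_const.mul hce).intervalIntegrable τ t
      have he : Real.exp (γ₁ * (τ - t)) ≤ 1 := by
        rw [← Real.exp_zero]
        exact Real.exp_le_exp.mpr (by nlinarith)
      have h01 : 0 ≤ 1 - Real.exp (γ₁ * (τ - t)) := by linarith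
      calc ‖∫ s in τ..t, T (τ - s) (P (f (u s)))‖
          ≤ |∫ s in τ..t, M * Cf * Real.exp (γ₁ * (τ - s))| :=
            intervalIntegral.norm_integral_le_abs_of_norm_le hb hg
        _ = |M * Cf * ((1 - Real.exp (γ₁ * (τ - t))) / γ₁)| := by
            rw [intervalIntegral.integral_const_mul, hIab]
        _ ≤ M * Cf / γ₁ := by
            rw [abs_of_nonneg (mul_nonneg (by positivity) (div_nonneg h01 hγ₁.le))]
            have hpos : 0 ≤ M * Cf * Real.exp (γ₁ * (τ - t)) / γ₁ := by positivity
            have heq : M * Cf * ((1 - Real.exp (γ₁ * (τ - t))) / γ₁)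
                = M * Cf / γ₁ - M * Cf * Real.exp (γ₁ * (τ - t)) / γ₁ := by ring
            linarith
    calc ‖P (u τ)‖ = ‖T (τ - t) (P (u t)) + ∫ s in t..τ, T (τ - s) (P (f (u s)))‖ := by
          rw [← hp τ t hτt]
      _ ≤ ‖T (τ - t) (P (u t))‖ + ‖∫ s in t..τ, T (τ - s) (P (f (u s)))‖ := norm_add_le _ _
      _ ≤ M * Real.exp (γ₁ * (τ - t)) * ‖P (u t)‖ + M * Cf / γ₁ := add_le_add h1 h2
  have part1 : ∀ τ t : ℝ, τ ≤ t →
      Real.exp (γ₁ * (t - τ)) * ((1 / M) * ‖P (u τ)‖ - Cf / γ₁) ≤ ‖P (u t)‖ := by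
    intro τ t hτt
    have hk := key τ t hτt
    have hE : Real.exp (γ₁ * (t - τ)) * Real.exp (γ₁ * (τ - t)) = 1 := by
      rw [← Real.exp_add, show γ₁ * (t - τ) + γ₁ * (τ - t) = 0 by ring, Real.exp_zero]
    have h1 : (1 / M) * ‖P (u τ)‖ - Cf / γ₁ ≤ Real.exp (γ₁ * (τ - t)) * ‖P (u t)‖ := by
      rw [one_div, inv_mul_eq_div, sub_le_iff_le_add, div_le_iff₀ hM0]
      calc ‖P (u τ)‖ ≤ M * Real.exp (γ₁ * (τ - t)) * ‖P (u t)‖ + M * Cf / γ₁ := hk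
        _ = (Real.exp (γ₁ * (τ - t)) * ‖P (u t)‖ + Cf / γ₁) * M := by ring
    calc Real.exp (γ₁ * (t - τ)) * ((1 / M) * ‖P (u τ)‖ - Cf / γ₁)
        ≤ Real.exp (γ₁ * (t - τ)) * (Real.exp (γ₁ * (τ - t)) * ‖P (u t)‖) :=
          mul_le_mul_of_nonneg_left h1 (Real.exp_pos _).le
      _ = ‖P (u t)‖ := by rw [← mul_assoc, hE, one_mul]
  refine ⟨part1, ?_⟩
  intro τ hτ
  have hc : 0 < (1 / M) * ‖P (u τ)‖ - Cf / γ₁ := by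
    rw [sub_pos, one_div, inv_mul_eq_div, lt_div_iff₀ hM0]
    calc Cf / γ₁ * M = M * Cf / γ₁ := by ring
      _ < ‖P (u τ)‖ := hτ
  have htend : Tendsto (fun t => Real.exp (γ₁ * (t - τ)) *
      ((1 / M) * ‖P (u τ)‖ - Cf / γ₁)) atTop atTop := by
    apply Tendsto.atTop_mul_const hc
    apply Real.tendsto_exp_atTop.comp
    apply Tendsto.const_mul_atTop hγ₁
    exact tendsto_atTop_add_const_right _ _ tendsto_id
  apply tendsto_atTop_mono' atTop _ htend
  filter_upwards [eventually_ge_atTop τ] with t ht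
  exact part1 τ t ht
end

section
/- Let {S(t)}_{t≥0} be a continuous semigroup on a Banach space X satisfying: if u ∈ J \ J_b then whenever S(t_n)u ∈ H_R for a sequence t_n → ∞ and some R ≥ R_0, it follows that {S(t)u : t ≥ 0} is contained in H_R. Then for every u ∈ J \ J_b (i.e., u lies on a solution bounded in the past but the forward orbit {S(t)u : t ≥ 0} is unbounded), one has lim_{t→∞} ‖S(t)u‖ = ∞. -/
open Set Filter Metric Bornology Topology

/-- Suppose that whenever a point `u ∈ J \ J_b` returns to some `H_R`
(`R ≥ R₀`) along a sequence of times tending to infinity, its whole forward orbit stays in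
`H_R`; and that the forward orbit of each `u ∈ J \ J_b` is unbounded. If each `H_R` is bounded
and every bounded set is contained in some `H_R` (`R ≥ R₀`), then `‖S(t)u‖ → ∞` as `t → ∞`
for every `u ∈ J \ J_b`. -/
theorem stmt14 {X : Type*} [NormedAddCommGroup X] [NormedSpace ℝ X] [CompleteSpace X]
    (S : ℝ → X → X)
    (hS0 : ∀ x, S 0 x = x)
    (hSadd : ∀ t s : ℝ, 0 ≤ t → 0 ≤ s → ∀ x, S (t + s) x = S t (S s x))
    (J Jb : Set X) (R₀ : ℝ) (H : ℝ → Set X)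
    (hHbdd : ∀ R : ℝ, R₀ ≤ R → Bornology.IsBounded (H R))
    (hHabs : ∀ B : Set X, Bornology.IsBounded B → ∃ R : ℝ, R₀ ≤ R ∧ B ⊆ H R)
    (hkey : ∀ u ∈ J \ Jb, ∀ R : ℝ, R₀ ≤ R →
      (∃ tseq : ℕ → ℝ, Tendsto tseq atTop atTop ∧ ∀ n, S (tseq n) u ∈ H R) →
      ∀ t : ℝ, 0 ≤ t → S t u ∈ H R)
    (hunbdd : ∀ u ∈ J \ Jb,
      ¬ Bornology.IsBounded ((fun t : ℝ => S t u) '' Set.Ici 0)) :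
    ∀ u ∈ J \ Jb, Tendsto (fun t : ℝ => ‖S t u‖) atTop atTop := by
  intro u hu
  by_contra hnot
  rw [Filter.tendsto_atTop] at hnot
  push_neg at hnot
  obtain ⟨M, hM⟩ := hnot
  rw [frequently_atTop] at hM
  -- build a sequence of times
  have hsel : ∀ n : ℕ, ∃ t : ℝ, (n : ℝ) ≤ t ∧ ‖S t u‖ < M := fun n => hM n
  choose tseq htge htlt using hsel
  obtain ⟨R, hR₀, hRsub⟩ := hHabs (Metric.closedBall (0 : X) M) isBounded_closedBall
  have horb : ∀ t : ℝ, 0 ≤ t → S t u ∈ H R := by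
    refine hkey u hu R hR₀ ⟨tseq, ?_, fun n => hRsub ?_⟩
    · exact tendsto_atTop_mono htge tendsto_natCast_atTop_atTop
    · simpa [Metric.mem_closedBall, dist_eq_norm] using (htlt n).le
  refine hunbdd u hu ((hHbdd R hR₀).subset ?_)
  rintro x ⟨t, ht, rfl⟩
  exact horb t ht
end
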